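/- Let 𝔸 = [[A, 𝓑ᵀ],[𝓑, 0]] be a saddle-point matrix where A ∈ ℝ^{n×n} is symmetric positive definite and 𝓑 ∈ ℝ^{m×n} has full row rank. Let ℙ = blockdiag(A, 𝓜) where 𝓜 ∈ ℝ^{m×m} is symmetric positive definite and spectrally equivalent to the Schur complement S = 𝓑A⁻¹𝓑ᵀ with constants 0 < γ ≤ xᵀSx/xᵀ𝓜x ≤ Γ. Then every eigenvalue ρ of ℙ⁻¹𝔸 satisfies ρ ∈ [−c₁, −c₂] ∪ [c₃, c₄], where the positive constants c₁, c₂, c₃, c₄ depend only on γ and Γ; in particular 0 is not an eigenvalue. -/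

import Mathlib

open Matrix

/-- Block-diagonal preconditioning of a symmetric saddle-point matrix: if `𝓜`
is spectrally equivalent to the Schur complement `𝓑A⁻¹𝓑ᵀ` with constants
`γ ≤ Γ`, then all eigenvalues of `ℙ⁻¹𝔸` lie in `[-c₁,-c₂] ∪ [c₃,c₄]` with
positive constants depending only on `γ` and `Γ`; in particular `0` is not an
eigenvalue. -/
theorem block_diagonal_preconditioner_eigenvalues
    {n m : ℕ}
    (A : Matrix (Fin n) (Fin n) ℝ) (hA : A.PosDef)
    (𝓑 : Matrix (Fin m) (Fin n) ℝ) (h𝓑 : 𝓑.rank = m)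
    (𝓜 : Matrix (Fin m) (Fin m) ℝ) (h𝓜 : 𝓜.PosDef)
    (γ Γ : ℝ) (hγ : 0 < γ) (hγΓ : γ ≤ Γ)
    (hlow : ∀ x : Fin m → ℝ, x ≠ 0 →
      γ ≤ (x ⬝ᵥ (𝓑 * A⁻¹ * 𝓑ᵀ).mulVec x) / (x ⬝ᵥ 𝓜.mulVec x))
    (hup : ∀ x : Fin m → ℝ, x ≠ 0 →
      (x ⬝ᵥ (𝓑 * A⁻¹ * 𝓑ᵀ).mulVec x) / (x ⬝ᵥ 𝓜.mulVec x) ≤ Γ) :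
    ∃ c₁ c₂ c₃ c₄ : ℝ, 0 < c₂ ∧ c₂ ≤ c₁ ∧ 0 < c₃ ∧ c₃ ≤ c₄ ∧
      ∀ (ρ : ℝ) (x : Fin n ⊕ Fin m → ℝ), x ≠ 0 →
        ((fromBlocks A 0 0 𝓜)⁻¹ * fromBlocks A 𝓑ᵀ 𝓑 0).mulVec x = ρ • x →
        ρ ∈ Set.Icc (-c₁) (-c₂) ∪ Set.Icc c₃ c₄ := by
  have hΓ : 0 < Γ := lt_of_lt_of_le hγ hγΓ
  refine ⟨Γ, γ / (1 + Γ), 1, 1 + Γ, div_pos hγ (by linarith), ?_, one_pos, by linarith, ?_⟩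
  · rw [div_le_iff₀ (by linarith)]; nlinarith
  intro ρ x hx heq
  -- invertibility of the preconditioner
  set ℙ : Matrix (Fin n ⊕ Fin m) (Fin n ⊕ Fin m) ℝ := fromBlocks A 0 0 𝓜 with hℙ
  have hdet : IsUnit ℙ.det := by
    rw [hℙ, det_fromBlocks_zero₂₁]
    exact (mul_pos hA.det_pos h𝓜.det_pos).ne'.isUnit
  have hPP : ℙ * ℙ⁻¹ = 1 := mul_nonsing_inv ℙ hdet
  have hAdet : IsUnit A.det := hA.det_pos.ne'.isUnit
  have hAinv : A⁻¹ * A = 1 := nonsing_inv_mul A hAdet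
  -- multiply eigen-equation by ℙ
  have h𝔸 : (fromBlocks A 𝓑ᵀ 𝓑 0).mulVec x = ρ • ℙ.mulVec x := by
    have := congrArg (fun y => ℙ.mulVec y) heq
    simpa [mulVec_mulVec, ← Matrix.mul_assoc, hPP, mulVec_smul] using this
  set u : Fin n → ℝ := x ∘ Sum.inl with hu
  set v : Fin m → ℝ := x ∘ Sum.inr with hv
  have hxe : x = Sum.elim u v := by funext i; cases i <;> rfl
  rw [hxe, fromBlocks_mulVec, hℙ, fromBlocks_mulVec] at h𝔸
  have h1 : A.mulVec u + 𝓑ᵀ.mulVec v = ρ • A.mulVec u := by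
    have := congrFun h𝔸
    funext i
    simpa using this (Sum.inl i)
  have h2 : 𝓑.mulVec u = ρ • 𝓜.mulVec v := by
    funext i
    simpa using congrFun h𝔸 (Sum.inr i)
  by_cases hv0 : v = 0
  · -- then ρ = 1
    have hu0 : u ≠ 0 := by
      intro h0
      apply hx
      rw [hxe, h0, hv0]
      funext i; cases i <;> rfl
    have hAu : A.mulVec u ≠ 0 := by
      intro h0
      have := hA.dotProduct_mulVec_pos hu0
      rw [show A *ᵥ u = A.mulVec u from rfl, h0] at this
      simp at this
    have hρ1 : ρ = 1 := by
      by_contra hne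
      have heq1 : A.mulVec u = ρ • A.mulVec u := by
        have := h1; rw [hv0] at this; simpa using this
      have hz : (1 - ρ) • A.mulVec u = 0 := by
        rw [sub_smul, one_smul, sub_eq_zero]; exact heq1
      have h1ρ : (1 : ℝ) - ρ ≠ 0 := sub_ne_zero.2 (Ne.symm hne)
      exact hAu (by simpa [h1ρ] using smul_eq_zero.mp hz)
    right; constructor <;> simp [hρ1]; linarith
  · -- v ≠ 0 : derive ρ(ρ-1) = σ
    have ht : 0 < v ⬝ᵥ 𝓜.mulVec v := by simpa using h𝓜.dotProduct_mulVec_pos hv0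
    have hBtv : 𝓑ᵀ.mulVec v = (ρ - 1) • A.mulVec u := by
      have : 𝓑ᵀ.mulVec v = ρ • A.mulVec u - A.mulVec u := by
        rw [← h1]; abel
      rw [this, sub_smul, one_smul]
    have hρ1 : ρ ≠ 1 := by
      intro h1'
      have hz : 𝓑ᵀ.mulVec v = 0 := by rw [hBtv, h1']; simp
      have hs0 : v ⬝ᵥ (𝓑 * A⁻¹ * 𝓑ᵀ).mulVec v = 0 := by
        rw [← mulVec_mulVec, hz]
        simp
      have := hlow v hv0
      rw [hs0, zero_div] at this
      linarith
    have hρ1' : ρ - 1 ≠ 0 := sub_ne_zero.2 hρ1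
    -- u = (ρ-1)⁻¹ • A⁻¹ (𝓑ᵀ v)
    have hugood : A⁻¹.mulVec (𝓑ᵀ.mulVec v) = (ρ - 1) • u := by
      rw [hBtv, mulVec_smul, mulVec_mulVec, hAinv, one_mulVec]
    have key : v ⬝ᵥ (𝓑 * A⁻¹ * 𝓑ᵀ).mulVec v = (ρ * (ρ - 1)) * (v ⬝ᵥ 𝓜.mulVec v) := by
      have e1 : (𝓑 * A⁻¹ * 𝓑ᵀ).mulVec v = (ρ - 1) • 𝓑.mulVec u := by
        rw [Matrix.mul_assoc, ← mulVec_mulVec, ← mulVec_mulVec, hugood, mulVec_smul]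
      rw [e1, h2]
      simp [dotProduct_smul, smul_eq_mul]
      ring
    have hg : γ ≤ ρ * (ρ - 1) := by
      have h' := hlow v hv0
      rwa [key, mul_div_assoc, div_self ht.ne', mul_one] at h'
    have hG : ρ * (ρ - 1) ≤ Γ := by
      have h' := hup v hv0
      rwa [key, mul_div_assoc, div_self ht.ne', mul_one] at h' 
    -- now pure algebra
    rcases le_or_gt ρ 0 with hρneg | hρpos
    · left
      constructor
      · nlinarith [sq_nonneg ρ]
      · have hl : -Γ ≤ ρ := by nlinarith [sq_nonneg ρ]
        rw [le_neg, div_le_iff₀ (by linarith : (0:ℝ) < 1 + Γ)]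
        nlinarith [mul_nonneg (neg_nonneg.2 hρneg) (by linarith : (0:ℝ) ≤ Γ + ρ)]
    · right
      have h1le : 1 ≤ ρ := by nlinarith
      exact ⟨h1le, by nlinarith⟩
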